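/- Let n ≥ 2 and let x_1, …, x_n be i.i.d. random variables uniformly distributed on [0,1]. Then E[1/(1 − x_1 x_2 ⋯ x_n)] = ζ(n), where ζ is the Riemann zeta function. -/

import Mathlib

open MeasureTheory ProbabilityTheory

lemma aux_lintegral_prod {Ω ι : Type*} [MeasurableSpace Ω] {μ : Measure Ω}
    [IsProbabilityMeasure μ] {f : ι → Ω → ENNReal}
    (hindep : iIndepFun f μ) (hmeas : ∀ i, Measurable (f i))
    (s : Finset ι) :
    ∫⁻ ω, ∏ i ∈ s, f i ω ∂μ = ∏ i ∈ s, ∫⁻ ω, f i ω ∂μ := by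
  classical
  induction s using Finset.cons_induction with
  | empty => simp
  | cons i s hi ih =>
    have hind : IndepFun (∏ j ∈ s, f j) (f i) μ :=
      hindep.indepFun_finsetProd_of_notMem hmeas hi
    have hprodmeas : Measurable (∏ j ∈ s, f j) := by
      have : (∏ j ∈ s, f j) = fun ω => ∏ j ∈ s, f j ω := by
        funext ω; simp
      rw [this]
      exact Finset.measurable_prod s fun j _ => hmeas j
    have key := lintegral_mul_eq_lintegral_mul_lintegral_of_indepFun
      hprodmeas (hmeas i) hind
    simp only [Finset.prod_cons]
    calc ∫⁻ ω, f i ω * ∏ j ∈ s, f j ω ∂μ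
        = ∫⁻ ω, ((∏ j ∈ s, f j) * f i) ω ∂μ := by
          refine lintegral_congr fun ω => ?_
          simp [mul_comm]
      _ = (∫⁻ ω, (∏ j ∈ s, f j) ω ∂μ) * ∫⁻ ω, f i ω ∂μ := key
      _ = (∫⁻ ω, ∏ j ∈ s, f j ω ∂μ) * ∫⁻ ω, f i ω ∂μ := by
          congr 1; exact lintegral_congr fun ω => by simp
      _ = (∫⁻ ω, f i ω ∂μ) * ∏ j ∈ s, ∫⁻ ω, f j ω ∂μ := by rw [ih, mul_comm]

lemma aux_moment (k : ℕ) :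
    ∫⁻ t in Set.Icc (0 : ℝ) 1, ENNReal.ofReal (t ^ k) ∂volume
      = ENNReal.ofReal (1 / (k + 1 : ℝ)) := by
  have hint : IntegrableOn (fun t : ℝ => t ^ k) (Set.Icc (0 : ℝ) 1) volume :=
    (continuous_pow k).integrableOn_Icc
  have hnn : 0 ≤ᵐ[volume.restrict (Set.Icc (0 : ℝ) 1)] fun t : ℝ => t ^ k := by
    refine (ae_restrict_iff' measurableSet_Icc).2 (Filter.Eventually.of_forall ?_)
    intro t ht
    exact pow_nonneg ht.1 k
  rw [← ofReal_integral_eq_lintegral_ofReal hint hnn]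
  congr 1
  rw [MeasureTheory.integral_Icc_eq_integral_Ioc,
    ← intervalIntegral.integral_of_le (zero_le_one' ℝ), integral_pow]
  simp

/-- For `n ≥ 2` and `x₁, …, xₙ` i.i.d. uniform on `[0,1]`,
`E[1/(1 - x₁⋯xₙ)] = ζ(n)`, the Riemann zeta function at `n`. -/
theorem stmt_14 {Ω : Type*} [MeasureSpace Ω] [IsProbabilityMeasure (ℙ : Measure Ω)]
    (n : ℕ) (hn : 2 ≤ n) (x : Fin n → Ω → ℝ)
    (hmeas : ∀ i, Measurable (x i))
    (hindep : iIndepFun x ℙ)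
    (hlaw : ∀ i, Measure.map (x i) ℙ
      = MeasureTheory.volume.restrict (Set.Icc (0 : ℝ) 1)) :
    ((∫ ω, 1 / (1 - ∏ i, x i ω) : ℝ) : ℂ) = riemannZeta n := by
  classical
  set T : Ω → ℝ := fun ω => ∏ i, x i ω with hTdef
  have hTmeas : Measurable T := Finset.measurable_prod _ fun i _ => hmeas i
  -- a.e. membership in [0,1]
  have hae : ∀ i, ∀ᵐ ω ∂(ℙ : Measure Ω), x i ω ∈ Set.Icc (0 : ℝ) 1 := by
    intro i
    rw [ae_iff]
    have hset : {ω | ¬ x i ω ∈ Set.Icc (0 : ℝ) 1} = x i ⁻¹' (Set.Icc (0 : ℝ) 1)ᶜ := rfl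
    rw [hset, ← Measure.map_apply (hmeas i) measurableSet_Icc.compl, hlaw i,
      Measure.restrict_apply measurableSet_Icc.compl]
    simp
  have hne1 : ∀ i, ∀ᵐ ω ∂(ℙ : Measure Ω), x i ω ≠ 1 := by
    intro i
    rw [ae_iff]
    have hset : {ω | ¬ x i ω ≠ 1} = x i ⁻¹' {(1 : ℝ)} := by
      ext ω; simp
    rw [hset, ← Measure.map_apply (hmeas i) (measurableSet_singleton 1), hlaw i,
      Measure.restrict_apply (measurableSet_singleton 1)]
    exact measure_mono_null Set.inter_subset_left (Real.volume_singleton)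
  have i0 : Fin n := ⟨0, by omega⟩
  have hT01 : ∀ᵐ ω ∂(ℙ : Measure Ω), T ω ∈ Set.Ico (0 : ℝ) 1 := by
    have hall : ∀ᵐ ω ∂(ℙ : Measure Ω), ∀ i, x i ω ∈ Set.Icc (0 : ℝ) 1 :=
      (ae_all_iff).2 hae
    filter_upwards [hall, hne1 i0] with ω hω hω1
    constructor
    · exact Finset.prod_nonneg fun i _ => (hω i).1
    · have h1 : T ω = x i0 ω * ∏ i ∈ Finset.univ.erase i0, x i ω :=
        (Finset.mul_prod_erase Finset.univ _ (Finset.mem_univ i0)).symm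
      have h2 : ∏ i ∈ Finset.univ.erase i0, x i ω ≤ 1 :=
        Finset.prod_le_one (fun i _ => (hω i).1) (fun i _ => (hω i).2)
      have h3 : T ω ≤ x i0 ω := by
        rw [h1]
        exact mul_le_of_le_one_right (hω i0).1 h2
      exact lt_of_le_of_lt h3 (lt_of_le_of_ne (hω i0).2 hω1)
  -- the lintegral computation
  have hfmeas : Measurable fun ω => 1 / (1 - T ω) := by
    simp only [one_div]
    exact (measurable_const.sub hTmeas).inv
  have hnn : 0 ≤ᵐ[(ℙ : Measure Ω)] fun ω => 1 / (1 - T ω) := by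
    filter_upwards [hT01] with ω hω
    have : 0 < 1 - T ω := by linarith [hω.2]
    positivity
  have hL : ∫⁻ ω, ENNReal.ofReal (1 / (1 - T ω)) ∂(ℙ : Measure Ω)
      = ∑' k : ℕ, (ENNReal.ofReal (1 / (k + 1 : ℝ))) ^ n := by
    have step1 : ∫⁻ ω, ENNReal.ofReal (1 / (1 - T ω)) ∂(ℙ : Measure Ω)
        = ∫⁻ ω, ∑' k : ℕ, (ENNReal.ofReal (T ω)) ^ k ∂(ℙ : Measure Ω) := by
      refine lintegral_congr_ae ?_
      filter_upwards [hT01] with ω hω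
      have h0 : (0 : ℝ) ≤ T ω := hω.1
      have h1 : T ω < 1 := hω.2
      rw [ENNReal.tsum_geometric]
      have hsub : (1 : ENNReal) - ENNReal.ofReal (T ω) = ENNReal.ofReal (1 - T ω) := by
        rw [ENNReal.ofReal_sub _ h0, ENNReal.ofReal_one]
      rw [hsub, one_div, ← ENNReal.ofReal_inv_of_pos (by linarith)]
    rw [step1, lintegral_tsum fun k => (hTmeas.ennreal_ofReal.pow_const k).aemeasurable]
    congr 1
    funext k
    -- each term
    have hterm : ∫⁻ ω, (ENNReal.ofReal (T ω)) ^ k ∂(ℙ : Measure Ω)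
        = ∫⁻ ω, ∏ i, ENNReal.ofReal ((x i ω) ^ k) ∂(ℙ : Measure Ω) := by
      refine lintegral_congr_ae ?_
      have hall : ∀ᵐ ω ∂(ℙ : Measure Ω), ∀ i, x i ω ∈ Set.Icc (0 : ℝ) 1 :=
        (ae_all_iff).2 hae
      filter_upwards [hall] with ω hω
      have h0 : (0 : ℝ) ≤ T ω := Finset.prod_nonneg fun i _ => (hω i).1
      rw [← ENNReal.ofReal_pow h0, hTdef]
      rw [← Finset.prod_pow]
      exact ENNReal.ofReal_prod_of_nonneg fun i _ => pow_nonneg (hω i).1 k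
    rw [hterm]
    have hg : Measurable fun t : ℝ => ENNReal.ofReal (t ^ k) :=
      (measurable_id.pow_const k).ennreal_ofReal
    have hcomp : iIndepFun
        (fun i ω => ENNReal.ofReal ((x i ω) ^ k)) (ℙ : Measure Ω) :=
      hindep.comp (fun _ t => ENNReal.ofReal (t ^ k)) fun _ => hg
    rw [aux_lintegral_prod hcomp (fun i => hg.comp (hmeas i)) Finset.univ]
    have hone : ∀ i : Fin n, ∫⁻ ω, ENNReal.ofReal ((x i ω) ^ k) ∂(ℙ : Measure Ω)
        = ENNReal.ofReal (1 / (k + 1 : ℝ)) := by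
      intro i
      rw [← lintegral_map hg (hmeas i), hlaw i, aux_moment]
    calc (∏ i : Fin n, ∫⁻ ω, ENNReal.ofReal ((x i ω) ^ k) ∂(ℙ : Measure Ω))
        = ∏ _i : Fin n, ENNReal.ofReal (1 / (k + 1 : ℝ)) := by
          refine Finset.prod_congr rfl fun i _ => ?_
          exact hone i
      _ = (ENNReal.ofReal (1 / (k + 1 : ℝ))) ^ n := by
          rw [Finset.prod_const, Finset.card_univ, Fintype.card_fin]
  -- summability of the real series
  have hsummable : Summable fun k : ℕ => (1 / ((k : ℝ) + 1)) ^ n := by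
    have h1 : Summable fun k : ℕ => 1 / ((k : ℝ) + 1) ^ n := by
      have := (summable_nat_add_iff (f := fun k : ℕ => 1 / (k : ℝ) ^ n) 1).2
        (Real.summable_one_div_nat_pow.2 (by omega))
      exact this.congr fun k => by push_cast; ring_nf
    exact h1.congr fun k => by rw [div_pow, one_pow]
  set S : ℝ := ∑' k : ℕ, (1 / ((k : ℝ) + 1)) ^ n with hSdef
  have hSnn : 0 ≤ S := tsum_nonneg fun k => by positivity
  have hL2 : ∫⁻ ω, ENNReal.ofReal (1 / (1 - T ω)) ∂(ℙ : Measure Ω) = ENNReal.ofReal S := by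
    rw [hL, hSdef, ENNReal.ofReal_tsum_of_nonneg (fun k => by positivity) hsummable]
    congr 1
    funext k
    rw [ENNReal.ofReal_pow (by positivity)]
  -- convert the Bochner integral
  have hint : (∫ ω, 1 / (1 - T ω) ∂(ℙ : Measure Ω)) = S := by
    rw [integral_eq_lintegral_of_nonneg_ae hnn hfmeas.aestronglyMeasurable, hL2,
      ENNReal.toReal_ofReal hSnn]
  have hTeq : (∫ ω, 1 / (1 - ∏ i, x i ω) ∂(ℙ : Measure Ω)) = S := hint
  rw [hTeq]
  -- now the zeta side
  have hzeta : riemannZeta (n : ℂ) = ∑' k : ℕ, 1 / ((k : ℂ) + 1) ^ (n : ℂ) :=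
    zeta_eq_tsum_one_div_nat_add_one_cpow (by
      rw [Complex.natCast_re]
      exact_mod_cast by omega : 1 < (n : ℂ).re)
  rw [hzeta]
  rw [hSdef, Complex.ofReal_tsum]
  congr 1
  funext k
  rw [show ((k : ℂ) + 1) ^ (n : ℂ) = ((k : ℂ) + 1) ^ n from Complex.cpow_natCast _ n]
  push_cast
  rw [div_pow, one_pow]
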